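/- Let ν ≥ 2 be an integer, let φ ∈ L²(ℝ) vanish almost everywhere outside [−ν+1, ν], and let j ∈ ℕ satisfy 2^j ≥ 2ν. For m ∈ {0, …, ν−1}, define the periodized function φ^per_{j,m} : [0,1] → ℝ by φ^per_{j,m}(x) = φ_{j,m}(x) + φ_{j, 2^j + m}(x), where φ_{j,k}(x) := 2^{j/2} φ(2^j x − k). Then for every n ∈ ℕ: ∫₀¹ φ^per_{j,m}(x) w_n(x) dx = Σ_{l=−ν+1}^{−m−1} 2^{−j/2} w_n((2^j + m + l)/2^j) · ∫₀¹ φ(x+l) w_{⌊n/2^j⌋}(x) dx + Σ_{l=−m}^{ν−1} 2^{−j/2} w_n((m+l)/2^j) · ∫₀¹ φ(x+l) w_{⌊n/2^j⌋}(x) dx (sums over empty index ranges are zero). -/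

import Mathlib

open MeasureTheory

/-- `natDigit n i` is the `i`-th binary digit `n^(i)` (for `i ≥ 1`) of `n ∈ ℕ`,
so that `n = Σ_{i ≥ 1} n^(i) 2^(i-1)`. -/
def natDigit (n i : ℕ) : ℕ := (n / 2 ^ (i - 1)) % 2

/-- `dyadicDigit x i` is the `i`-th dyadic digit `x^(i) = ⌊2^i x⌋ − 2⌊2^(i−1) x⌋`
(for `i ≥ 1`) of `x ∈ [0,1)`. -/
noncomputable def dyadicDigit (x : ℝ) (i : ℕ) : ℤ :=
  ⌊(2 : ℝ) ^ i * x⌋ - 2 * ⌊(2 : ℝ) ^ (i - 1) * x⌋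

/-- The sequency-ordered Walsh function
`w_n(x) = (−1)^{Σ_{i≥1} (n^(i) + n^(i+1)) x^(i)}`; the sum is finite since
`n^(i) = 0` for `i > n`, so it may be truncated at `i = n + 1`. -/
noncomputable def walsh (n : ℕ) (x : ℝ) : ℝ :=
  (-1 : ℝ) ^ ∑ i ∈ Finset.Icc 1 (n + 1),
    (natDigit n i + natDigit n (i + 1)) * (dyadicDigit x i).toNat

/-- The dyadic XOR `x ⊕ y := Σ_{i≥1} |x^(i) − y^(i)| 2^{−i}` of `x, y ∈ [0,1)`. -/
noncomputable def dyadicXor (x y : ℝ) : ℝ :=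
  ∑' i : ℕ, |(dyadicDigit x (i + 1) : ℝ) - (dyadicDigit y (i + 1) : ℝ)| / 2 ^ (i + 1)

lemma floor_aux1 (k q : ℕ) (t : ℝ) (ht0 : 0 ≤ t) (ht1 : t < 1) :
    ⌊((k : ℝ) + t) / 2 ^ q⌋ = (k / 2 ^ q : ℕ) := by
  have h2 : (0:ℝ) < 2 ^ q := by positivity
  have hd : 2 ^ q * (k / 2 ^ q) + k % 2 ^ q = k := Nat.div_add_mod k (2 ^ q)
  have hr : k % 2 ^ q < 2 ^ q := Nat.mod_lt _ (by positivity)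
  have hle : (2:ℝ) ^ q * (k / 2 ^ q : ℕ) ≤ (k : ℝ) := by
    exact_mod_cast (by omega : 2 ^ q * (k / 2 ^ q) ≤ k)
  have hlt : (k : ℝ) + 1 ≤ 2 ^ q * (k / 2 ^ q : ℕ) + 2 ^ q := by
    exact_mod_cast (by omega : k + 1 ≤ 2 ^ q * (k / 2 ^ q) + 2 ^ q)
  rw [Int.floor_eq_iff]
  refine ⟨?_, ?_⟩
  · rw [le_div_iff₀ h2]
    rw [Int.cast_natCast]
    linarith
  · rw [div_lt_iff₀ h2]
    rw [Int.cast_natCast]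
    nlinarith

lemma floor_aux2 (k p : ℕ) (t : ℝ) :
    ⌊(2:ℝ) ^ p * ((k:ℝ) + t)⌋ = 2 ^ p * k + ⌊(2:ℝ) ^ p * t⌋ := by
  have h : (2:ℝ)^p * ((k:ℝ)+t) = (2:ℝ)^p * t + ((2^p * k : ℕ) : ℝ) := by push_cast; ring
  rw [h, Int.floor_add_natCast]
  push_cast; ring

lemma dyadicDigit_low (j k i : ℕ) (t : ℝ) (ht0 : 0 ≤ t) (ht1 : t < 1)
    (hi1 : 1 ≤ i) (hij : i ≤ j) :
    dyadicDigit (((k:ℝ) + t) / 2 ^ j) i = ((k / 2 ^ (j - i)) % 2 : ℕ) := by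
  have hp : (2:ℝ)^i * 2^(j-i) = 2^j := by rw [← pow_add, Nat.add_sub_cancel' hij]
  have hp' : (2:ℝ)^(i-1) * 2^(j-i+1) = 2^j := by
    rw [← pow_add]; congr 1; omega
  have e1 : (2:ℝ)^i * (((k:ℝ)+t)/2^j) = ((k:ℝ)+t)/2^(j-i) := by
    rw [← hp, div_mul_eq_div_div_swap, mul_comm, div_mul_cancel₀ _ (by positivity : ((2:ℝ)^i) ≠ 0)]
  have e2 : (2:ℝ)^(i-1) * (((k:ℝ)+t)/2^j) = ((k:ℝ)+t)/2^(j-i+1) := by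
    rw [← hp', div_mul_eq_div_div_swap, mul_comm,
      div_mul_cancel₀ _ (by positivity : ((2:ℝ)^(i-1)) ≠ 0)]
  rw [dyadicDigit, e1, e2, floor_aux1 _ _ t ht0 ht1, floor_aux1 _ _ t ht0 ht1]
  have h2 : k / 2^(j-i+1) = (k / 2^(j-i)) / 2 := by
    rw [Nat.div_div_eq_div_mul, pow_succ]
  rw [h2]
  omega

lemma dyadicDigit_high (j k i : ℕ) (t : ℝ) (hij : j < i) :
    dyadicDigit (((k:ℝ) + t) / 2 ^ j) i = dyadicDigit t (i - j) := by
  have hp : (2:ℝ)^(i-j) * 2^j = 2^i := by rw [← pow_add]; congr 1; omega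
  have hp' : (2:ℝ)^(i-j-1) * 2^j = 2^(i-1) := by rw [← pow_add]; congr 1; omega
  have hmd : ∀ a : ℝ, (2:ℝ)^j * (a / 2^j) = a := fun a => by
    field_simp
  have e1 : (2:ℝ)^i * (((k:ℝ)+t)/2^j) = (2:ℝ)^(i-j) * ((k:ℝ)+t) := by
    rw [← hp, mul_assoc, hmd]
  have e2 : (2:ℝ)^(i-1) * (((k:ℝ)+t)/2^j) = (2:ℝ)^(i-j-1) * ((k:ℝ)+t) := by
    rw [← hp', mul_assoc, hmd]
  rw [dyadicDigit, e1, e2, floor_aux2, floor_aux2, dyadicDigit]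
  have h2 : (2:ℤ)^(i-j) = 2 * 2^(i-j-1) := by
    rw [← pow_succ']; congr 1; omega
  have h3 : i - j - 1 = (i - j) - 1 := rfl
  rw [h3] at *
  push_cast
  rw [h2]
  ring

lemma dyadicDigit_zero_arg (p : ℕ) : dyadicDigit 0 p = 0 := by
  simp [dyadicDigit]

lemma natDigit_shift (n j i : ℕ) (hi : 1 ≤ i) : natDigit n (j + i) = natDigit (n / 2 ^ j) i := by
  unfold natDigit
  rw [Nat.div_div_eq_div_mul, ← pow_add, show j + (i-1) = j + i - 1 from by omega]

lemma natDigit_eq_zero (n i : ℕ) (h : n < 2 ^ (i - 1)) : natDigit n i = 0 := by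
  unfold natDigit
  rw [Nat.div_eq_of_lt h]

lemma walsh_eq_sum (n N : ℕ) (hN : n ≤ N) (x : ℝ) :
    walsh n x = (-1:ℝ) ^ ∑ i ∈ Finset.Icc 1 (N+1),
      (natDigit n i + natDigit n (i+1)) * (dyadicDigit x i).toNat := by
  unfold walsh
  congr 1
  apply Finset.sum_subset (Finset.Icc_subset_Icc_right (by omega))
  intro i hi hni
  simp only [Finset.mem_Icc] at hi hni
  have h2 : n + 2 ≤ i := by omega
  have hb1 : n < 2 ^ (i - 1) := lt_of_lt_of_le (Nat.lt_two_pow_self (n := n))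
    (Nat.pow_le_pow_right (by norm_num) (by omega))
  have hb2 : n < 2 ^ ((i+1) - 1) := lt_of_lt_of_le (Nat.lt_two_pow_self (n := n))
    (Nat.pow_le_pow_right (by norm_num) (by omega))
  rw [natDigit_eq_zero n i hb1, natDigit_eq_zero n (i+1) hb2]
  simp

lemma walsh_factor (n j k : ℕ) (hk : k < 2 ^ j) (t : ℝ) (ht0 : 0 ≤ t) (ht1 : t < 1) :
    walsh n (((k:ℝ) + t) / 2 ^ j) =
      walsh n ((k:ℝ) / 2 ^ j) * walsh (n / 2 ^ j) t := by
  set N := n + j with hNdef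
  have hxk : (k:ℝ) / 2 ^ j = ((k:ℝ) + 0) / 2 ^ j := by ring_nf
  rw [walsh_eq_sum n N (by omega) (((k:ℝ) + t) / 2 ^ j),
      walsh_eq_sum n N (by omega) ((k:ℝ) / 2 ^ j),
      walsh_eq_sum (n / 2^j) n (Nat.div_le_self n _) t]
  have hIcc : ∀ M : ℕ, Finset.Icc 1 M = Finset.Ioc 0 M := by
    intro M; ext a; simp [Nat.lt_iff_add_one_le]
  simp only [hIcc]
  have hsplit : ∀ f : ℕ → ℕ, (∑ i ∈ Finset.Ioc 0 j, f i) + ∑ i ∈ Finset.Ioc j (N+1), f i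
      = ∑ i ∈ Finset.Ioc 0 (N+1), f i := fun f =>
    Finset.sum_Ioc_consecutive f (Nat.zero_le j) (by omega)
  rw [← hsplit fun i => (natDigit n i + natDigit n (i+1)) * (dyadicDigit (((k:ℝ)+t)/2^j) i).toNat,
      ← hsplit fun i => (natDigit n i + natDigit n (i+1)) * (dyadicDigit ((k:ℝ)/2^j) i).toNat]
  -- low digits agree
  have hlow : ∑ i ∈ Finset.Ioc 0 j,
      (natDigit n i + natDigit n (i+1)) * (dyadicDigit (((k:ℝ)+t)/2^j) i).toNat
      = ∑ i ∈ Finset.Ioc 0 j,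
      (natDigit n i + natDigit n (i+1)) * (dyadicDigit ((k:ℝ)/2^j) i).toNat := by
    apply Finset.sum_congr rfl
    intro i hi
    simp only [Finset.mem_Ioc] at hi
    rw [dyadicDigit_low j k i t ht0 ht1 (by omega) hi.2, hxk,
      dyadicDigit_low j k i 0 le_rfl one_pos (by omega) hi.2]
  -- high digits of k/2^j vanish
  have hhk : ∑ i ∈ Finset.Ioc j (N+1),
      (natDigit n i + natDigit n (i+1)) * (dyadicDigit ((k:ℝ)/2^j) i).toNat = 0 := by
    apply Finset.sum_eq_zero
    intro i hi
    simp only [Finset.mem_Ioc] at hi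
    rw [hxk, dyadicDigit_high j k i 0 hi.1, dyadicDigit_zero_arg]
    simp
  -- high digits of x give walsh of t
  have hhigh : ∑ i ∈ Finset.Ioc j (N+1),
      (natDigit n i + natDigit n (i+1)) * (dyadicDigit (((k:ℝ)+t)/2^j) i).toNat
      = ∑ i ∈ Finset.Ioc 0 (n+1),
      (natDigit (n/2^j) i + natDigit (n/2^j) (i+1)) * (dyadicDigit t i).toNat := by
    have hmap : Finset.Ioc j (N+1) = (Finset.Ioc 0 (n+1)).map (addLeftEmbedding j) := by
      rw [Finset.map_add_left_Ioc]
      congr 1 <;> omega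
    rw [hmap, Finset.sum_map]
    apply Finset.sum_congr rfl
    intro i hi
    simp only [Finset.mem_Ioc] at hi
    simp only [addLeftEmbedding_apply]
    rw [dyadicDigit_high j k (j+i) t (by omega), show j + i - j = i from by omega,
      natDigit_shift n j i (by omega), show j + i + 1 = j + (i+1) from rfl,
      natDigit_shift n j (i+1) (by omega)]
  rw [hlow, hhk, hhigh, add_zero, pow_add]

lemma walsh_abs (n : ℕ) (x : ℝ) : |walsh n x| = 1 := by
  unfold walsh
  rw [abs_pow, abs_neg, abs_one, one_pow]

lemma measurable_walsh (n : ℕ) : Measurable (walsh n) := by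
  unfold walsh
  have h1 : Measurable fun x : ℝ => ∑ i ∈ Finset.Icc 1 (n+1),
      (natDigit n i + natDigit n (i+1)) * (dyadicDigit x i).toNat := by
    apply Finset.measurable_sum
    intro i _
    apply Measurable.mul measurable_const
    have hd : Measurable fun x : ℝ => dyadicDigit x i := by
      unfold dyadicDigit
      exact (Int.measurable_floor.comp (measurable_const_mul _)).sub
        ((Int.measurable_floor.comp (measurable_const_mul _)).const_mul 2)
    exact (measurable_from_top (f := Int.toNat)).comp hd
  exact (measurable_from_top (f := fun s : ℕ => (-1:ℝ)^s)).comp h1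

lemma walsh_piece (φ : ℝ → ℝ) (n j c k : ℕ) (hc : c < 2 ^ j) (l : ℤ) (hl : (c : ℤ) = k + l) :
    (∫ x in ((c:ℝ)/2^j)..(((c:ℝ)+1)/2^j),
      (2:ℝ)^((j:ℝ)/2) * φ (2^j * x - k) * walsh n x)
    = (2:ℝ)^(-(j:ℝ)/2) * walsh n ((c:ℝ)/2^j) *
        ∫ t in (0:ℝ)..1, φ (t + l) * walsh (n / 2^j) t := by
  have h2j : (0:ℝ) < 2^j := by positivity
  have hcl : (c:ℝ) = (k:ℝ) + l := by exact_mod_cast hl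
  have hab : (c:ℝ)/2^j ≤ ((c:ℝ)+1)/2^j := by
    gcongr
    linarith
  set w1 := walsh n ((c:ℝ)/2^j) with hw1
  set n' := n / 2^j with hn'
  set H : ℝ → ℝ := fun y => (2:ℝ)^((j:ℝ)/2) * φ (y - k) * (w1 * walsh n' (y - c)) with hH
  have hend : ∀ᵐ x : ℝ, x ≠ (((c:ℝ)+1)/2^j) := by
    rw [ae_iff]
    simp only [not_not]
    rw [Set.setOf_eq_eq_singleton]
    exact measure_singleton _
  have step1 : (∫ x in ((c:ℝ)/2^j)..(((c:ℝ)+1)/2^j),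
      (2:ℝ)^((j:ℝ)/2) * φ (2^j * x - k) * walsh n x)
      = ∫ x in ((c:ℝ)/2^j)..(((c:ℝ)+1)/2^j), H (2^j * x) := by
    apply intervalIntegral.integral_congr_ae
    filter_upwards [hend] with x hx hxI
    rw [Set.uIoc_of_le hab, Set.mem_Ioc] at hxI
    have hlt : x < ((c:ℝ)+1)/2^j := lt_of_le_of_ne hxI.2 hx
    have ht0 : (0:ℝ) ≤ 2^j * x - c := by
      have := hxI.1
      rw [div_lt_iff₀ h2j] at this
      linarith
    have ht1 : 2^j * x - c < 1 := by
      rw [lt_div_iff₀ h2j] at hlt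
      linarith
    have hxe : x = ((c:ℝ) + (2^j * x - c))/2^j := by field_simp; ring
    have hxf : walsh n x = w1 * walsh n' (2^j * x - c) := by
      rw [hw1, hn']
      calc walsh n x = walsh n (((c:ℝ) + (2^j*x - c))/2^j) := by rw [← hxe]
        _ = walsh n ((c:ℝ)/2^j) * walsh (n / 2^j) (2^j*x - c) :=
          walsh_factor n j c hc _ ht0 ht1
    simp only [hH]
    rw [hxf]
  rw [step1]
  rw [intervalIntegral.integral_comp_mul_left H (show ((2:ℝ)^j) ≠ 0 by positivity)]
  have he1 : (2:ℝ)^j * ((c:ℝ)/2^j) = (c:ℝ) := by field_simp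
  have he2 : (2:ℝ)^j * (((c:ℝ)+1)/2^j) = (c:ℝ)+1 := by field_simp
  rw [he1, he2]
  have step2 : (∫ y in (c:ℝ)..((c:ℝ)+1), H y) = ∫ s in (0:ℝ)..1, H (s + c) := by
    rw [intervalIntegral.integral_comp_add_right H (c:ℝ), zero_add,
      show (1:ℝ)+(c:ℝ) = (c:ℝ)+1 from by ring]
  rw [step2]
  have step3 : (∫ s in (0:ℝ)..1, H (s + c))
      = ∫ s in (0:ℝ)..1, ((2:ℝ)^((j:ℝ)/2) * w1) * (φ (s + l) * walsh n' s) := by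
    apply intervalIntegral.integral_congr
    intro s _
    simp only [hH]
    rw [show s + (c:ℝ) - (k:ℝ) = s + l from by rw [hcl]; ring,
      show s + (c:ℝ) - (c:ℝ) = s from by ring]
    ring
  rw [step3, intervalIntegral.integral_const_mul]
  have hpow : ((2:ℝ)^j)⁻¹ * (2:ℝ)^((j:ℝ)/2) = (2:ℝ)^(-(j:ℝ)/2) := by
    have h1 : ((2:ℝ)^j : ℝ) = (2:ℝ)^((j:ℝ)) := by
      rw [← Real.rpow_natCast 2 j]
    rw [h1, ← Real.rpow_neg (by norm_num), ← Real.rpow_add (by norm_num)]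
    congr 1
    ring
  rw [smul_eq_mul, ← hpow]
  ring

lemma qmp_affine (a : ℝ) (ha : a ≠ 0) (b : ℝ) :
    Measure.QuasiMeasurePreserving (fun x : ℝ => a * x - b) volume volume := by
  have h1 : Measure.QuasiMeasurePreserving (fun x : ℝ => a * x) volume volume :=
    ⟨measurable_const_mul a, by
      rw [Real.map_volume_mul_left ha]
      exact Measure.smul_absolutelyContinuous⟩
  have h2 : Measure.QuasiMeasurePreserving (fun y : ℝ => y - b) volume volume :=
    (measurePreserving_sub_right volume b).quasiMeasurePreserving
  exact h2.comp h1

lemma walsh_intInt (φ : ℝ → ℝ) (hL2 : MemLp φ 2 volume) (n j k : ℕ) :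
    IntervalIntegrable (fun x => (2:ℝ)^((j:ℝ)/2) * φ (2^j * x - k) * walsh n x)
      volume 0 1 := by
  have hφ : ∀ A B : ℝ, IntervalIntegrable φ volume A B := by
    intro A B
    rw [intervalIntegrable_iff]
    have hfin : IsFiniteMeasure (volume.restrict (Set.uIoc A B)) := by
      constructor
      rw [Measure.restrict_apply_univ, Set.uIoc, Real.volume_Ioc]
      exact ENNReal.ofReal_lt_top
    exact (hL2.restrict _).integrable (by norm_num)
  have h1 : IntervalIntegrable (fun y => φ (y - k)) volume 0 (2^j) := by
    have := (hφ (-(k:ℝ)) ((2:ℝ)^j - k)).comp_sub_right (k:ℝ)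
    simpa using this
  have h2 : IntervalIntegrable (fun x => φ (2^j * x - k)) volume 0 1 := by
    have := h1.comp_mul_left (c := (2:ℝ)^j)
    simpa [div_self (show ((2:ℝ)^j) ≠ 0 by positivity)] using this
  rw [intervalIntegrable_iff] at h2 ⊢
  have h3 : Integrable (fun x => walsh n x * ((2:ℝ)^((j:ℝ)/2) * φ (2^j * x - k)))
      (volume.restrict (Set.uIoc 0 1)) := by
    apply Integrable.bdd_mul (c := 1) (h2.const_mul _) (measurable_walsh n).aestronglyMeasurable
    exact Filter.Eventually.of_forall (fun x => by rw [Real.norm_eq_abs, walsh_abs])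
  have heq : (fun x => (2:ℝ)^((j:ℝ)/2) * φ (2^j * x - k) * walsh n x)
      = fun x => walsh n x * ((2:ℝ)^((j:ℝ)/2) * φ (2^j * x - k)) := by
    funext x; ring
  rw [heq]
  exact h3

/-- Left-edge periodized scaling functions: for `ν ≥ 2`,
`φ ∈ L²(ℝ)` supported in `[−ν+1, ν]`, `2^j ≥ 2ν` and `0 ≤ m ≤ ν−1`, the
Walsh coefficients of `φ^per_{j,m} = φ_{j,m} + φ_{j,2^j+m}` on `[0,1]` satisfy the
stated two-sum formula. -/
theorem walsh_periodic_left_edge (ν : ℕ) (hν : 2 ≤ ν) (φ : ℝ → ℝ)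
    (hL2 : MemLp φ 2 volume)
    (hsupp : ∀ᵐ x : ℝ, x ∉ Set.Icc (-(ν : ℝ) + 1) (ν : ℝ) → φ x = 0)
    (j : ℕ) (hj : 2 * ν ≤ 2 ^ j) (m : ℕ) (hm : m < ν) (n : ℕ) :
    ∫ x in (0 : ℝ)..1,
        ((2 : ℝ) ^ ((j : ℝ) / 2) * φ (2 ^ j * x - m) +
          (2 : ℝ) ^ ((j : ℝ) / 2) * φ (2 ^ j * x - (2 ^ j + m))) * walsh n x =
      (∑ l ∈ Finset.Icc (-(ν : ℤ) + 1) (-(m : ℤ) - 1),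
        (2 : ℝ) ^ (-(j : ℝ) / 2) * walsh n (((2 : ℝ) ^ j + m + l) / 2 ^ j) *
          ∫ x in (0 : ℝ)..1, φ (x + l) * walsh (n / 2 ^ j) x) +
      ∑ l ∈ Finset.Icc (-(m : ℤ)) ((ν : ℤ) - 1),
        (2 : ℝ) ^ (-(j : ℝ) / 2) * walsh n (((m : ℝ) + l) / 2 ^ j) *
          ∫ x in (0 : ℝ)..1, φ (x + l) * walsh (n / 2 ^ j) x := by
  have h2j : (0:ℝ) < 2^j := by positivity
  have h2jne : ((2:ℝ)^j) ≠ 0 := ne_of_gt h2j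
  have hνm : ν + m < 2^j := by omega
  set F : ℕ → ℝ → ℝ := fun k x => (2:ℝ)^((j:ℝ)/2) * φ (2^j * x - k) * walsh n x with hF
  set I : ℤ → ℝ := fun l => ∫ x in (0:ℝ)..1, φ (x + l) * walsh (n / 2^j) x with hIdef
  have hIk : ∀ (k : ℕ) (a b : ℝ), Set.uIcc a b ⊆ Set.uIcc 0 1 →
      IntervalIntegrable (F k) volume a b := fun k a b h =>
    (walsh_intInt φ hL2 n j k).mono_set h
  -- cast of 2^j as real
  have hcast : ((2^j : ℕ) : ℝ) = (2:ℝ)^j := by push_cast; ring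
  -- pulled-back support hypothesis
  have hsupp' : ∀ k : ℕ, ∀ᵐ x : ℝ,
      ((2:ℝ)^j * x - k ∉ Set.Icc (-(ν:ℝ)+1) (ν:ℝ)) → φ ((2:ℝ)^j * x - k) = 0 :=
    fun k => (qmp_affine ((2:ℝ)^j) h2jne (k:ℝ)).ae hsupp
  -- LHS splits
  have hLHS : (∫ x in (0:ℝ)..1,
        ((2 : ℝ) ^ ((j : ℝ) / 2) * φ (2 ^ j * x - m) +
          (2 : ℝ) ^ ((j : ℝ) / 2) * φ (2 ^ j * x - (2 ^ j + m))) * walsh n x)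
      = (∫ x in (0:ℝ)..1, F m x) + ∫ x in (0:ℝ)..1, F (2^j + m) x := by
    rw [← intervalIntegral.integral_add (hIk m 0 1 (by simp)) (hIk (2^j+m) 0 1 (by simp))]
    apply intervalIntegral.integral_congr
    intro x _
    simp only [hF]
    push_cast
    ring
  rw [hLHS]
  ---------------------------------------------------------------- Part A : F m
  have hA : (∫ x in (0:ℝ)..1, F m x)
      = ∑ l ∈ Finset.Icc (-(m:ℤ)) ((ν:ℤ)-1),
          (2:ℝ)^(-(j:ℝ)/2) * walsh n (((m:ℝ)+l)/2^j) * I l := by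
    set a1 : ℕ → ℝ := fun i => if i ≤ ν + m then (i:ℝ)/2^j else 1 with ha1
    have ha1mem : ∀ i : ℕ, a1 i ∈ Set.uIcc (0:ℝ) 1 := by
      intro i
      rw [Set.uIcc_of_le zero_le_one, Set.mem_Icc]
      by_cases h : i ≤ ν + m
      · simp only [ha1, if_pos h]
        constructor
        · positivity
        · rw [div_le_one h2j]
          calc (i:ℝ) ≤ ((ν+m:ℕ):ℝ) := by exact_mod_cast h
            _ ≤ ((2^j:ℕ):ℝ) := by exact_mod_cast hνm.le
            _ = (2:ℝ)^j := hcast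
      · simp [ha1, if_neg h]
    have hsub1 : ∀ i : ℕ, Set.uIcc (a1 i) (a1 (i+1)) ⊆ Set.uIcc (0:ℝ) 1 :=
      fun i => Set.uIcc_subset_uIcc (ha1mem i) (ha1mem (i+1))
    have hadj1 : ∑ i ∈ Finset.range (ν+m+1), ∫ x in a1 i..a1 (i+1), F m x
        = ∫ x in (0:ℝ)..1, F m x := by
      have h := intervalIntegral.sum_integral_adjacent_intervals
        (a := a1) (μ := volume) (f := F m) (n := ν+m+1)
        (fun k _ => hIk m _ _ (hsub1 k))
      have h0 : a1 0 = 0 := by simp [ha1]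
      have hN : a1 (ν+m+1) = 1 := by simp only [ha1]; rw [if_neg (by omega)]
      rw [h0, hN] at h
      exact h
    have hpiece1 : ∀ i ∈ Finset.range (ν+m), (∫ x in a1 i..a1 (i+1), F m x)
        = (2:ℝ)^(-(j:ℝ)/2) * walsh n ((i:ℝ)/2^j) * I ((i:ℤ) - m) := by
      intro i hi
      rw [Finset.mem_range] at hi
      have e1 : a1 i = (i:ℝ)/2^j := by simp only [ha1]; rw [if_pos (by omega)]
      have e2 : a1 (i+1) = ((i:ℝ)+1)/2^j := by
        simp only [ha1]; rw [if_pos (by omega)]; push_cast; ring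
      rw [e1, e2]
      exact walsh_piece φ n j i m (by omega) ((i:ℤ) - m) (by ring)
    have hlast1 : (∫ x in a1 (ν+m)..a1 (ν+m+1), F m x) = 0 := by
      have e1 : a1 (ν+m) = ((ν+m:ℕ):ℝ)/2^j := by simp only [ha1]; rw [if_pos le_rfl]
      have e2 : a1 (ν+m+1) = 1 := by simp only [ha1]; rw [if_neg (by omega)]
      rw [e1, e2]
      apply intervalIntegral.integral_zero_ae
      have hab : ((ν+m:ℕ):ℝ)/2^j ≤ 1 := by
        rw [div_le_one h2j]
        calc ((ν+m:ℕ):ℝ) ≤ ((2^j:ℕ):ℝ) := by exact_mod_cast hνm.le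
          _ = (2:ℝ)^j := hcast
      filter_upwards [hsupp' m] with x hx hxI
      rw [Set.uIoc_of_le hab, Set.mem_Ioc] at hxI
      have hgt : (2:ℝ)^j * x - m > ν := by
        have h1 := hxI.1
        rw [div_lt_iff₀ h2j] at h1
        push_cast at h1
        linarith
      have : φ ((2:ℝ)^j * x - m) = 0 := by
        apply hx
        rw [Set.mem_Icc]
        push_neg
        intro
        linarith
      simp only [hF, this, mul_zero, zero_mul]
    rw [← hadj1, Finset.sum_range_succ, hlast1, add_zero,
      Finset.sum_congr rfl hpiece1]
    apply Finset.sum_nbij' (i := fun i : ℕ => (i:ℤ) - m) (j := fun l : ℤ => (l + m).toNat)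
    · intro i hi
      rw [Finset.mem_range] at hi
      rw [Finset.mem_Icc]
      omega
    · intro l hl
      rw [Finset.mem_Icc] at hl
      rw [Finset.mem_range]
      omega
    · intro i hi
      rw [Finset.mem_range] at hi
      omega
    · intro l hl
      rw [Finset.mem_Icc] at hl
      omega
    · intro i hi
      congr 2
      push_cast
      ring
  ---------------------------------------------------------------- Part B : F (2^j + m)
  have hB : (∫ x in (0:ℝ)..1, F (2^j + m) x)
      = ∑ l ∈ Finset.Icc (-(ν:ℤ)+1) (-(m:ℤ)-1),
          (2:ℝ)^(-(j:ℝ)/2) * walsh n (((2:ℝ)^j + m + l)/2^j) * I l := by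
    obtain ⟨q, hq⟩ : ∃ q : ℕ, q = 2^j + 1 + m - ν := ⟨_, rfl⟩
    have hqν : q + (ν - m) - 1 = 2^j := by omega
    have hqz : (q:ℤ) = ((2^j : ℕ):ℤ) + 1 + m - ν := by omega
    have hqcast : (q:ℝ) = (2:ℝ)^j + 1 + m - ν := by
      have := congrArg (fun z : ℤ => (z:ℝ)) hqz
      push_cast at this
      linarith [this]
    set a2 : ℕ → ℝ := fun i => if i = 0 then 0 else ((q + i - 1 : ℕ):ℝ)/2^j with ha2
    have ha2cast : ∀ i : ℕ, 1 ≤ i → ((q + i - 1 : ℕ):ℝ) = (q:ℝ) + i - 1 := by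
      intro i hi
      have : ((q + i - 1 : ℕ):ℤ) = (q:ℤ) + i - 1 := by omega
      have := congrArg (fun z : ℤ => (z:ℝ)) this
      push_cast at this
      linarith [this]
    have ha2mem : ∀ i : ℕ, i ≤ ν - m → a2 i ∈ Set.uIcc (0:ℝ) 1 := by
      intro i hi
      rw [Set.uIcc_of_le zero_le_one, Set.mem_Icc]
      by_cases h : i = 0
      · simp [ha2, h]
      · simp only [ha2, if_neg h]
        constructor
        · positivity
        · rw [div_le_one h2j]
          calc ((q + i - 1:ℕ):ℝ) ≤ ((2^j:ℕ):ℝ) := by exact_mod_cast (by omega : q + i - 1 ≤ 2^j)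
            _ = (2:ℝ)^j := hcast
    have hsub2 : ∀ i : ℕ, i + 1 ≤ ν - m → Set.uIcc (a2 i) (a2 (i+1)) ⊆ Set.uIcc (0:ℝ) 1 :=
      fun i hi => Set.uIcc_subset_uIcc (ha2mem i (by omega)) (ha2mem (i+1) hi)
    have hadj2 : ∑ i ∈ Finset.range (ν-m), ∫ x in a2 i..a2 (i+1), F (2^j+m) x
        = ∫ x in (0:ℝ)..1, F (2^j+m) x := by
      have h := intervalIntegral.sum_integral_adjacent_intervals
        (a := a2) (μ := volume) (f := F (2^j+m)) (n := ν-m)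
        (fun k hk => hIk (2^j+m) _ _ (hsub2 k (by omega)))
      have h0 : a2 0 = 0 := by simp [ha2]
      have hN : a2 (ν-m) = 1 := by
        simp only [ha2]
        rw [if_neg (by omega)]
        rw [show q + (ν-m) - 1 = 2^j from by omega, hcast]
        field_simp
      rw [h0, hN] at h
      exact h
    have hpiece2 : ∀ i : ℕ, 1 ≤ i → i < ν - m → (∫ x in a2 i..a2 (i+1), F (2^j+m) x)
        = (2:ℝ)^(-(j:ℝ)/2) * walsh n (((q + i - 1 : ℕ):ℝ)/2^j) * I ((i:ℤ) - ν) := by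
      intro i h1i hi
      have e1 : a2 i = ((q + i - 1 : ℕ):ℝ)/2^j := by simp only [ha2]; rw [if_neg (by omega)]
      have e2 : a2 (i+1) = (((q + i - 1:ℕ):ℝ)+1)/2^j := by
        simp only [ha2]
        rw [if_neg (by omega)]
        rw [ha2cast (i+1) (by omega), ha2cast i h1i]
        push_cast
        ring_nf
      rw [e1, e2]
      apply walsh_piece φ n j (q + i - 1) (2^j + m) (by omega) ((i:ℤ) - ν)
      omega
    have hzero2 : (∫ x in (a2 0)..(a2 1), F (2^j+m) x) = 0 := by
      have e1 : a2 0 = 0 := by simp [ha2]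
      have e2 : a2 1 = (q:ℝ)/2^j := by
        simp only [ha2]
        rw [if_neg (by omega), show q + 1 - 1 = q from by omega]
      rw [e1, e2]
      apply intervalIntegral.integral_zero_ae
      have hq0 : (0:ℝ) ≤ (q:ℝ)/2^j := by positivity
      have hend : ∀ᵐ x : ℝ, x ≠ (q:ℝ)/2^j := by
        rw [ae_iff]
        simp only [not_not]
        rw [Set.setOf_eq_eq_singleton]
        exact measure_singleton _
      filter_upwards [hsupp' (2^j+m), hend] with x hx hxe hxI
      rw [Set.uIoc_of_le hq0, Set.mem_Ioc] at hxI
      have hlt : x < (q:ℝ)/2^j := lt_of_le_of_ne hxI.2 hxe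
      rw [lt_div_iff₀ h2j] at hlt
      have harg : (2:ℝ)^j * x - ((2^j+m:ℕ):ℝ) < -(ν:ℝ)+1 := by
        rw [hcast] at *
        push_cast
        rw [hqcast] at hlt
        linarith
      have : φ ((2:ℝ)^j * x - ((2^j+m:ℕ):ℝ)) = 0 := by
        apply hx
        rw [Set.mem_Icc]
        push_neg
        intro h
        linarith
      simp only [hF, this, mul_zero, zero_mul]
    -- split off the zero piece
    have hsplit : ∑ i ∈ Finset.range (ν-m), ∫ x in a2 i..a2 (i+1), F (2^j+m) x
        = ∑ i ∈ Finset.Ico 1 (ν-m), ∫ x in a2 i..a2 (i+1), F (2^j+m) x := by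
      rw [Finset.range_eq_Ico, ← Finset.sum_Ico_consecutive _ (Nat.zero_le 1) (by omega : 1 ≤ ν - m)]
      rw [show Finset.Ico 0 1 = {0} from rfl, Finset.sum_singleton, hzero2, zero_add]
    have hs2 : ∀ i ∈ Finset.Ico 1 (ν-m), (∫ x in a2 i..a2 (i+1), F (2^j+m) x)
        = (2:ℝ)^(-(j:ℝ)/2) * walsh n (((q + i - 1 : ℕ):ℝ)/2^j) * I ((i:ℤ) - ν) := by
      intro i hi
      rw [Finset.mem_Ico] at hi
      exact hpiece2 i hi.1 hi.2
    rw [← hadj2, hsplit, Finset.sum_congr rfl hs2]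
    apply Finset.sum_nbij' (i := fun i : ℕ => (i:ℤ) - ν) (j := fun l : ℤ => (l + ν).toNat)
    · intro i hi
      rw [Finset.mem_Ico] at hi
      rw [Finset.mem_Icc]
      omega
    · intro l hl
      rw [Finset.mem_Icc] at hl
      rw [Finset.mem_Ico]
      omega
    · intro i hi
      rw [Finset.mem_Ico] at hi
      omega
    · intro l hl
      rw [Finset.mem_Icc] at hl
      omega
    · intro i hi
      rw [Finset.mem_Ico] at hi
      have harg : ((q + i - 1 : ℕ):ℝ)/2^j = ((2:ℝ)^j + (m:ℝ) + (((i:ℤ) - ν : ℤ):ℝ))/2^j := by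
        rw [ha2cast i hi.1, hqcast]
        push_cast
        ring
      rw [harg]
  rw [hA, hB]
  ring
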